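/- Let A ⊆ B(X) be an abelian, unital, norm-closed subalgebra with split strict multiplicity p (X = Ax₁ ⊕ ··· ⊕ Ax_p, all Axⱼ closed), and let M ⊆ A be a maximal ideal. Then for each j the subspace M·xⱼ = {m xⱼ : m ∈ M} is a closed subspace of X. -/

import Mathlib

set_option maxHeartbeats 1000000
set_option synthInstance.maxHeartbeats 400000


/-- If `A ⊆ B(X)` is an abelian, unital, norm-closed operator algebra with split
strict multiplicity `p` and `M ⊆ A` is a maximal ideal, then each subspace
`M xⱼ = {m xⱼ : m ∈ M}` is closed in `X`. -/
theorem stmt5 {X : Type*} [NormedAddCommGroup X] [NormedSpace ℂ X] [CompleteSpace X]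
    (A : Subalgebra ℂ (X →L[ℂ] X))
    (hA : IsClosed (A : Set (X →L[ℂ] X)))
    (hcomm : ∀ a ∈ A, ∀ b ∈ A, a * b = b * a)
    (p : ℕ) (x : Fin p → X)
    (hc : ∀ j, IsClosed {y : X | ∃ a ∈ A, a (x j) = y})
    (hspan : ∀ y : X, ∃ f : Fin p → (X →L[ℂ] X), (∀ j, f j ∈ A) ∧ y = ∑ j, f j (x j))
    (hind : ∀ f : Fin p → (X →L[ℂ] X), (∀ j, f j ∈ A) →
      (∑ j, f j (x j)) = 0 → ∀ j, f j (x j) = 0)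
    (M : Ideal ↥A) (hM : M.IsMaximal) :
    ∀ j, IsClosed {y : X | ∃ m ∈ M, ((m : X →L[ℂ] X)) (x j) = y} := by
  intro j
  haveI : CompleteSpace ↥A := hA.completeSpace_coe
  -- the evaluation map
  set φ : ↥A →L[ℂ] X :=
    { toFun := fun a => (a : X →L[ℂ] X) (x j)
      map_add' := by intro a b; simp
      map_smul' := by intro c a; simp
      cont := (ContinuousLinearMap.apply ℂ X (x j)).continuous.comp continuous_subtype_val }
    with hφ
  have hφ_apply : ∀ a : ↥A, φ a = (a : X →L[ℂ] X) (x j) := fun a => rfl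
  -- the kernel ideal
  set I : Ideal ↥A :=
    { carrier := {a : ↥A | (a : X →L[ℂ] X) (x j) = 0}
      add_mem' := by intro a b ha hb; simp only [Set.mem_setOf_eq] at *; simp [ha, hb]
      zero_mem' := by simp
      smul_mem' := by
        intro r a ha
        simp only [Set.mem_setOf_eq] at *
        show ((r * a : ↥A) : X →L[ℂ] X) (x j) = 0
        simp [ha] } with hI
  by_cases hle : I ≤ M
  · -- I ⊆ M : use the open mapping theorem
    have hMclosed : IsClosed (M : Set ↥A) := Ideal.IsMaximal.isClosed
    set Y : Submodule ℂ X := LinearMap.range (φ : ↥A →ₗ[ℂ] X) with hY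
    have hYset : (Y : Set X) = {y : X | ∃ a ∈ A, a (x j) = y} := by
      ext y
      constructor
      · rintro ⟨a, rfl⟩; exact ⟨a, a.2, rfl⟩
      · rintro ⟨a, ha, rfl⟩; exact ⟨⟨a, ha⟩, rfl⟩
    have hYclosed : IsClosed (Y : Set X) := hYset ▸ hc j
    haveI : CompleteSpace ↥Y := hYclosed.completeSpace_coe
    set φ' : ↥A →L[ℂ] ↥Y := φ.codRestrict Y (fun a => LinearMap.mem_range_self _ a) with hφ'
    have hsurj : Function.Surjective φ' := by
      rintro ⟨y, a, rfl⟩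
      exact ⟨a, rfl⟩
    have hopen : IsOpenMap φ' := φ'.isOpenMap hsurj
    -- saturation
    have hsat : ∀ a b : ↥A, b ∈ M → φ' a = φ' b → a ∈ M := by
      intro a b hb hab
      have : a - b ∈ I := by
        have h1 : φ a = φ b := congrArg Subtype.val hab
        simp only [hI, Submodule.mem_mk, AddSubmonoid.mem_mk, AddSubsemigroup.mem_mk,
          Set.mem_setOf_eq]
        show ((a - b : ↥A) : X →L[ℂ] X) (x j) = 0
        rw [Subalgebra.coe_sub]
        simp only [ContinuousLinearMap.sub_apply]
        rw [← hφ_apply, ← hφ_apply, h1, sub_self]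
      have := hle this
      simpa using M.add_mem this hb
    have himg : IsClosed (φ' '' (M : Set ↥A)) := by
      rw [← isOpen_compl_iff]
      have : (φ' '' (M : Set ↥A))ᶜ = φ' '' ((M : Set ↥A)ᶜ) := by
        ext y
        constructor
        · intro hy
          obtain ⟨a, rfl⟩ := hsurj y
          refine ⟨a, ?_, rfl⟩
          intro haM
          exact hy ⟨a, haM, rfl⟩
        · rintro ⟨a, ha, rfl⟩ ⟨b, hb, hba⟩
          exact ha (hsat a b hb hba.symm)
      rw [this]
      exact hopen _ (hMclosed.isOpen_compl)
    have hfinal : {y : X | ∃ m ∈ M, ((m : X →L[ℂ] X)) (x j) = y}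
        = Subtype.val '' (φ' '' (M : Set ↥A)) := by
      ext y
      constructor
      · rintro ⟨m, hm, rfl⟩
        exact ⟨φ' ⟨m, m.2⟩, ⟨⟨m, m.2⟩, by simpa using hm, rfl⟩, rfl⟩
      · rintro ⟨yv, ⟨a, ha, hav⟩, rfl⟩
        exact ⟨a, ha, congrArg Subtype.val hav⟩
    rw [hfinal]
    exact hYclosed.isClosedEmbedding_subtypeVal.isClosedMap _ himg
  · -- I ⊄ M : then M ⊔ I = ⊤ and M xⱼ = A xⱼ
    have htop : M ⊔ I = ⊤ := by
      rcases hM.out with ⟨-, h2⟩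
      exact h2 _ (lt_of_le_of_ne le_sup_left (by
        intro h
        exact hle (le_trans le_sup_right h.ge)))
    have : {y : X | ∃ m ∈ M, ((m : X →L[ℂ] X)) (x j) = y}
        = {y : X | ∃ a ∈ A, a (x j) = y} := by
      ext y
      constructor
      · rintro ⟨m, hm, rfl⟩
        exact ⟨m, m.2, rfl⟩
      · rintro ⟨a, ha, rfl⟩
        have : (⟨a, ha⟩ : ↥A) ∈ M ⊔ I := htop ▸ Submodule.mem_top
        rcases Submodule.mem_sup.mp this with ⟨m, hm, i, hi, hmi⟩
        refine ⟨m, hm, ?_⟩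
        have hival : (i : X →L[ℂ] X) (x j) = 0 := hi
        have : ((m : X →L[ℂ] X) + i) (x j) = a (x j) := by
          rw [show (m : X →L[ℂ] X) + i = a from congrArg Subtype.val hmi]
        simpa [hival] using this
    rw [this]
    exact hc j
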